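/- arXiv:1208.0128 — 3 statements merged into one kernel-verified Lean document; each statement's English description precedes it below -/
import Mathlib

section
/- Let k be a field of characteristic zero and K ⊇ k an algebraically closed field extension. Let B be a commutative k-algebra and let I be a radical ideal of B ⊗_k K such that (B ⊗_k K)/I is a finitely generated K-algebra. For a k-algebra homomorphism f : B → K, let f^K : B ⊗_k K → K denote its K-algebra extension (b ⊗ λ ↦ f(b)·λ). Suppose that for every k-algebra automorphism σ of K and every k-algebra homomorphism f : B → K with I ⊆ ker(f^K), one also has I ⊆ ker((σ ∘ f)^K). Then there exists a radical ideal I_0 ⊆ B such that B/I_0 is a finitely generated k-algebra and I is the ideal of B ⊗_k K generated by the image of I_0 (equivalently, I = I_0 ⊗_k K under the canonical identification). -/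
open TensorProduct

set_option synthInstance.maxHeartbeats 1000000
set_option maxHeartbeats 2000000

private lemma aux_exists_moving (k K : Type*) [Field k] [CharZero k]
    (x : K) [Field K] [IsAlgClosed K] [Algebra k K]
    (hx : x ∉ (algebraMap k K).range) : ∃ σ : K ≃ₐ[k] K, σ x ≠ x := by
  by_cases halg : IsAlgebraic k x
  · -- algebraic case
    set L := algebraicClosure k K with hL
    haveI : IsAlgClosure k ↥L := algebraicClosure.isAlgClosure k K
    haveI : IsAlgClosed ↥L := IsAlgClosure.isAlgClosed k
    haveI : CharZero ↥L := charZero_of_injective_algebraMap (algebraMap k ↥L).injective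
    set xL : ↥L := ⟨x, mem_algebraicClosure_iff.mpr halg⟩ with hxL
    have hint : IsIntegral k xL := by
      have : IsIntegral k (algebraMap ↥L K xL) := halg.isIntegral
      exact (isIntegral_algHom_iff (IsScalarTower.toAlgHom k ↥L K)
        (algebraMap ↥L K).injective).mp this
    have hsep : IsSeparable k xL := PerfectField.separable_of_irreducible (minpoly.irreducible hint)
    have hsplit : ((minpoly k xL).map (algebraMap k ↥L)).Splits := Normal.splits inferInstance xL
    have hbot : xL ∉ (⊥ : Subalgebra k ↥L) := by
      intro hmem
      rw [Algebra.mem_bot] at hmem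
      obtain ⟨c, hc⟩ := hmem
      refine hx ⟨c, ?_⟩
      have : algebraMap ↥L K (algebraMap k ↥L c) = algebraMap ↥L K xL := by rw [hc]
      rwa [← IsScalarTower.algebraMap_apply] at this
    obtain ⟨y, hxy, hconj⟩ := (notMem_iff_exists_ne_and_isConjRoot hsep hsplit).mp hbot
    obtain ⟨τ', hτ'⟩ := hconj.exists_algEquiv
    set τ : ↥L ≃ₐ[k] ↥L := τ'.symm with hτdef
    have hτ : τ xL = y := by rw [hτdef, ← hτ', AlgEquiv.symm_apply_apply]
    -- transcendence basis of K over L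
    obtain ⟨ι, v, hv⟩ := exists_isTranscendenceBasis' ↥L (A := K)
    haveI := IsAlgClosed.isAlgClosure_of_transcendence_basis v hv
    set M := Algebra.adjoin ↥L (Set.range v) with hM
    haveI : NoZeroSMulDivisors ↥M K :=
      ⟨fun {c x} h => by rw [Algebra.smul_def, mul_eq_zero] at h; exact h.imp_left (map_eq_zero_iff _ (show Function.Injective (algebraMap ↥M K) from Subtype.val_injective)).mp⟩
    set e0 : MvPolynomial ι ↥L ≃ₐ[k] MvPolynomial ι ↥L := MvPolynomial.mapAlgEquiv ι τ with he0
    set e : ↥M ≃+* ↥M :=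
      (hv.1.aevalEquiv.symm.toRingEquiv.trans e0.toRingEquiv).trans
        hv.1.aevalEquiv.toRingEquiv with he
    set ψ := IsAlgClosure.equivOfEquiv K K e with hψ
    have key : ∀ l : ↥L, ψ (algebraMap ↥L K l) = algebraMap ↥L K (τ l) := by
      intro l
      rw [IsScalarTower.algebraMap_apply ↥L ↥M K l, hψ, IsAlgClosure.equivOfEquiv_algebraMap]
      have h1 : e (algebraMap ↥L ↥M l) = algebraMap ↥L ↥M (τ l) := by
        have h2 : hv.1.aevalEquiv.symm (algebraMap ↥L ↥M l)
            = algebraMap ↥L (MvPolynomial ι ↥L) l := hv.1.aevalEquiv.symm.commutes l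
        have h3 : e0 (algebraMap ↥L (MvPolynomial ι ↥L) l)
            = algebraMap ↥L (MvPolynomial ι ↥L) (τ l) := by
          simp only [he0, MvPolynomial.algebraMap_eq, MvPolynomial.mapAlgEquiv_apply,
            MvPolynomial.map_C]
          rfl
        have h4 : hv.1.aevalEquiv (algebraMap ↥L (MvPolynomial ι ↥L) (τ l))
            = algebraMap ↥L ↥M (τ l) := hv.1.aevalEquiv.commutes (τ l)
        simp only [he, RingEquiv.trans_apply, AlgEquiv.toRingEquiv_eq_coe,
          AlgEquiv.coe_ringEquiv]
        rw [h2, h3, h4]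
      rw [h1, ← IsScalarTower.algebraMap_apply]
    have hfixk : ∀ c : k, ψ (algebraMap k K c) = algebraMap k K c := by
      intro c
      rw [IsScalarTower.algebraMap_apply k ↥L K c, key, τ.commutes]
    refine ⟨AlgEquiv.ofRingEquiv hfixk, ?_⟩
    have hx' : x = algebraMap ↥L K xL := rfl
    show ψ x ≠ x
    rw [hx', key]
    intro hcon
    have h5 : τ xL = xL := Subtype.val_injective (show (↑(τ xL) : K) = ↑xL from hcon)
    exact hxy (by rw [← hτ, h5])
  · -- transcendental case
    have htr : Transcendental k x := halg
    have hsing : AlgebraicIndependent k ((↑) : ({x} : Set K) → K) := by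
      rw [algebraicIndependent_unique_type_iff]
      simpa using htr
    obtain ⟨u, hxu, hmax⟩ := exists_maximal_algebraicIndependent {x} Set.univ
      (Set.subset_univ _) hsing
    have hu : IsTranscendenceBasis k ((↑) : u → K) := by
      refine ⟨hmax.prop.1, fun t ht hst => ?_⟩
      simp only [Subtype.range_coe_subtype, Set.setOf_mem_eq] at *
      exact hmax.eq_of_le ⟨ht, Set.subset_univ _⟩ hst
    haveI := IsAlgClosed.isAlgClosure_of_transcendence_basis _ hu
    set M := Algebra.adjoin k (Set.range ((↑) : u → K)) with hM
    haveI : NoZeroSMulDivisors ↥M K :=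
      ⟨fun {c x} h => by rw [Algebra.smul_def, mul_eq_zero] at h; exact h.imp_left (map_eq_zero_iff _ (show Function.Injective (algebraMap ↥M K) from Subtype.val_injective)).mp⟩
    set g : MvPolynomial u k ≃ₐ[k] MvPolynomial u k :=
      AlgEquiv.ofAlgHom (MvPolynomial.aeval fun i => MvPolynomial.X i + 1)
        (MvPolynomial.aeval fun i => MvPolynomial.X i - 1)
        (by ext i; simp) (by ext i; simp) with hg
    set e : ↥M ≃ₐ[k] ↥M := (hu.1.aevalEquiv.symm.trans (g.trans hu.1.aevalEquiv)) with he
    set ψ := IsAlgClosure.equivOfEquiv K K e.toRingEquiv with hψ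
    have hfixk : ∀ c : k, ψ (algebraMap k K c) = algebraMap k K c := by
      intro c
      rw [IsScalarTower.algebraMap_apply k ↥M K c, hψ, IsAlgClosure.equivOfEquiv_algebraMap]
      simp only [AlgEquiv.toRingEquiv_eq_coe, AlgEquiv.coe_ringEquiv, AlgEquiv.commutes]
      try rw [← IsScalarTower.algebraMap_apply]
    refine ⟨AlgEquiv.ofRingEquiv hfixk, ?_⟩
    show ψ x ≠ x
    have hxmem : x ∈ u := hxu rfl
    set i₀ : u := ⟨x, hxmem⟩ with hi₀
    have hx1 : algebraMap ↥M K (hu.1.aevalEquiv (MvPolynomial.X i₀)) = x := by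
      rw [hu.1.algebraMap_aevalEquiv, MvPolynomial.aeval_X]
    have he1 : e (hu.1.aevalEquiv (MvPolynomial.X i₀))
        = hu.1.aevalEquiv (MvPolynomial.X i₀) + 1 := by
      rw [he]
      simp only [AlgEquiv.trans_apply, AlgEquiv.symm_apply_apply]
      have : g (MvPolynomial.X i₀) = MvPolynomial.X i₀ + 1 := by
        rw [hg]; simp [AlgEquiv.ofAlgHom]
      rw [this, map_add, map_one]
    rw [← hx1, hψ, IsAlgClosure.equivOfEquiv_algebraMap]
    simp only [AlgEquiv.toRingEquiv_eq_coe, AlgEquiv.coe_ringEquiv]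
    rw [he1, map_add, map_one, hx1]
    simp

private lemma aux_fixed (k K : Type*) [Field k] [CharZero k] [Field K] [IsAlgClosed K]
    [Algebra k K] (x : K) (hfix : ∀ σ : K ≃ₐ[k] K, σ x = x) :
    x ∈ (algebraMap k K).range := by
  by_contra hx
  obtain ⟨σ, hσ⟩ := aux_exists_moving k K x hx
  exact hσ (hfix σ)

private lemma aux_core (k K : Type*) [Field k] [CharZero k] [Field K] [IsAlgClosed K]
    [Algebra k K] (N : Type*) [AddCommGroup N] [Module k N]
    (V : Submodule K (K ⊗[k] N))
    (hstab : ∀ (σ : K ≃ₐ[k] K) (v : K ⊗[k] N), v ∈ V →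
      (LinearMap.rTensor N (σ.toLinearMap : K →ₗ[k] K)) v ∈ V)
    (hdisj : ∀ n : N, (1 : K) ⊗ₜ[k] n ∈ V → n = 0) : V = ⊥ := by
  by_contra hV
  -- basis
  let bN := Module.Basis.ofVectorSpace k N
  let bK := bN.baseChange K
  -- repr commutes with rTensor
  have hrepr : ∀ (σ : K ≃ₐ[k] K) (z : K ⊗[k] N) (i),
      bK.repr (LinearMap.rTensor N (σ.toLinearMap : K →ₗ[k] K) z) i = σ (bK.repr z i) := by
    intro σ z i
    induction z using TensorProduct.induction_on with
    | zero => simp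
    | tmul a n =>
        simp only [LinearMap.rTensor_tmul, AlgEquiv.toLinearMap_apply]
        rw [Module.Basis.baseChange_repr_tmul, Module.Basis.baseChange_repr_tmul]
        rw [Algebra.smul_def, Algebra.smul_def, map_mul, AlgEquiv.commutes]
    | add z₁ z₂ h1 h2 => simp [map_add, h1, h2]
  -- set of support cardinalities of nonzero elements of V
  set S : Set ℕ := {n | ∃ v ∈ V, v ≠ 0 ∧ (bK.repr v).support.card = n} with hS
  have hSne : S.Nonempty := by
    obtain ⟨v, hvV, hv0⟩ := Submodule.exists_mem_ne_zero_of_ne_bot hV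
    exact ⟨_, v, hvV, hv0, rfl⟩
  obtain ⟨v, hvV, hv0, hvcard⟩ := Nat.sInf_mem hSne
  set c := bK.repr v with hc
  classical
  have hsupp : c.support.Nonempty := by
    rw [Finsupp.support_nonempty_iff]
    intro h0
    exact hv0 (bK.repr.map_eq_zero_iff.mp h0)
  obtain ⟨i₀, hi₀⟩ := hsupp
  have hci₀ : c i₀ ≠ 0 := Finsupp.mem_support_iff.mp hi₀
  set v' := (c i₀)⁻¹ • v with hv'
  have hv'V : v' ∈ V := V.smul_mem _ hvV
  have hv'0 : v' ≠ 0 := by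
    simp only [hv', smul_ne_zero_iff]
    exact ⟨inv_ne_zero hci₀, hv0⟩
  set c' := bK.repr v' with hc'
  have hc'eq : c' = (c i₀)⁻¹ • c := by rw [hc', hv', map_smul, hc]
  have hc'i₀ : c' i₀ = 1 := by rw [hc'eq]; simp [inv_mul_cancel₀ hci₀]
  have hc'supp : c'.support = c.support := by
    rw [hc'eq]; exact Finsupp.support_smul_eq (inv_ne_zero hci₀)
  -- every coordinate is fixed by every σ
  have hfixcoord : ∀ (σ : K ≃ₐ[k] K) (i), σ (c' i) = c' i := by
    intro σ i
    set w := LinearMap.rTensor N (σ.toLinearMap : K →ₗ[k] K) v' - v' with hw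
    have hwV : w ∈ V := V.sub_mem (hstab σ v' hv'V) hv'V
    have hwrepr : ∀ j, bK.repr w j = σ (c' j) - c' j := by
      intro j; rw [hw, map_sub, Finsupp.sub_apply, hrepr]
    have hwsupp : (bK.repr w).support ⊆ c'.support.erase i₀ := by
      intro j hj
      rw [Finsupp.mem_support_iff, hwrepr] at hj
      rw [Finset.mem_erase, Finsupp.mem_support_iff]
      constructor
      · rintro rfl
        rw [hc'i₀, map_one, sub_self] at hj; exact hj rfl
      · intro h0
        rw [h0, map_zero, sub_zero] at hj; exact hj rfl
    have hw0 : w = 0 := by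
      by_contra hw0
      have : (bK.repr w).support.card ∈ S := ⟨w, hwV, hw0, rfl⟩
      have hge := Nat.sInf_le this
      have hlt : (bK.repr w).support.card < sInf S := by
        calc (bK.repr w).support.card ≤ (c'.support.erase i₀).card :=
              Finset.card_le_card hwsupp
          _ < c'.support.card := by
              apply Finset.card_erase_lt_of_mem
              rw [hc'supp]; exact hi₀
          _ = sInf S := by rw [hc'supp, ← hvcard]
      omega
    have h1 := (hwrepr i).symm
    rw [hw0] at h1
    simp only [map_zero, Finsupp.coe_zero, Pi.zero_apply] at h1
    exact sub_eq_zero.mp h1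
  -- all coordinates lie in k
  have hrange : ∀ i, c' i ∈ (algebraMap k K).range := fun i =>
    aux_fixed k K (c' i) (fun σ => hfixcoord σ i)
  choose κ hκ using hrange
  set n₀ : N := c'.support.sum (fun i => κ i • bN i) with hn₀
  have hreprn₀ : ∀ i, bN.repr n₀ i = if i ∈ c'.support then κ i else 0 := by
    intro i
    by_cases hi : i ∈ c'.support
    · rw [hn₀, map_sum, Finsupp.finset_sum_apply, Finset.sum_eq_single i]
      · simp [hi]
      · intro j _ hji
        simp [Module.Basis.repr_self, Finsupp.single_apply, hji]
      · intro h; exact absurd hi h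
    · rw [hn₀, map_sum, Finsupp.finset_sum_apply, if_neg hi]
      apply Finset.sum_eq_zero
      intro j hj
      have hji : j ≠ i := fun h => hi (h ▸ hj)
      simp [Module.Basis.repr_self, Finsupp.single_apply, hji]
  have hkey : v' = (1 : K) ⊗ₜ[k] n₀ := by
    apply bK.repr.injective
    ext i
    rw [Module.Basis.baseChange_repr_tmul]
    rw [hreprn₀]
    by_cases hi : i ∈ c'.support
    · simp only [hi, if_true]
      rw [Algebra.smul_def, mul_one, hκ]
    · simp only [hi, if_false, zero_smul]
      exact Finsupp.notMem_support_iff.mp hi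
  have : n₀ = 0 := hdisj n₀ (hkey ▸ hv'V)
  rw [this, tmul_zero] at hkey
  exact hv'0 hkey

private lemma aux_points (k K B : Type*) [Field k] [Field K] [IsAlgClosed K] [Algebra k K]
    [CommRing B] [Algebra k B] (I : Ideal (K ⊗[k] B)) (hrad : I.IsRadical)
    (hfg : Algebra.FiniteType K ((K ⊗[k] B) ⧸ I)) (a : K ⊗[k] B) (ha : a ∉ I) :
    ∃ f : B →ₐ[k] K,
      (I ≤ RingHom.ker (Algebra.TensorProduct.productMap (AlgHom.id k K) f)) ∧
      Algebra.TensorProduct.productMap (AlgHom.id k K) f a ≠ 0 := by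
  haveI := hfg
  haveI : IsJacobsonRing K := inferInstance
  haveI : IsJacobsonRing ((K ⊗[k] B) ⧸ I) := isJacobsonRing_of_finiteType (A := K)
  have hrad0 : (⊥ : Ideal ((K ⊗[k] B) ⧸ I)).radical = ⊥ := by
    refine le_antisymm ?_ Ideal.le_radical
    intro x hx
    obtain ⟨n, hn⟩ := Ideal.mem_radical_iff.mp hx
    obtain ⟨y, rfl⟩ := Ideal.Quotient.mk_surjective x
    rw [Ideal.mem_bot] at hn ⊢
    rw [← map_pow, Ideal.Quotient.eq_zero_iff_mem] at hn
    rw [Ideal.Quotient.eq_zero_iff_mem]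
    exact hrad ⟨n, hn⟩
  have haJ : Ideal.Quotient.mk I a ∉ (⊥ : Ideal ((K ⊗[k] B) ⧸ I)).jacobson := by
    rw [← Ideal.radical_eq_jacobson, hrad0, Ideal.mem_bot]
    exact fun h => ha (Ideal.Quotient.eq_zero_iff_mem.mp h)
  rw [Ideal.jacobson, Ideal.mem_sInf] at haJ
  push_neg at haJ
  obtain ⟨m, ⟨-, hmax⟩, hnm⟩ := haJ
  haveI := hmax
  letI : Field (((K ⊗[k] B) ⧸ I) ⧸ m) := Ideal.Quotient.field m
  haveI : Algebra.FiniteType K (((K ⊗[k] B) ⧸ I) ⧸ m) :=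
    hfg.of_surjective (Ideal.Quotient.mkₐ K m) (Ideal.Quotient.mkₐ_surjective K m)
  haveI : Module.Finite K (((K ⊗[k] B) ⧸ I) ⧸ m) :=
    finite_of_finite_type_of_isJacobsonRing K _
  haveI : Algebra.IsIntegral K (((K ⊗[k] B) ⧸ I) ⧸ m) := Algebra.IsIntegral.of_finite K _
  have hsurj : Function.Surjective (algebraMap K (((K ⊗[k] B) ⧸ I) ⧸ m)) :=
    IsAlgClosed.algebraMap_bijective_of_isIntegral.2
  set ε : K ≃ₐ[K] (((K ⊗[k] B) ⧸ I) ⧸ m) :=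
    AlgEquiv.ofBijective (Algebra.ofId K _) ⟨(algebraMap K _).injective, hsurj⟩ with hε
  set π : (K ⊗[k] B) →ₐ[K] (((K ⊗[k] B) ⧸ I) ⧸ m) :=
    (Ideal.Quotient.mkₐ K m).comp (Ideal.Quotient.mkₐ K I) with hπ
  set φ : (K ⊗[k] B) →ₐ[k] K := (ε.symm.toAlgHom.comp π).restrictScalars k with hφdef
  set f : B →ₐ[k] K := φ.comp Algebra.TensorProduct.includeRight with hf
  have hφ : Algebra.TensorProduct.productMap (AlgHom.id k K) f = φ := by
    apply Algebra.TensorProduct.ext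
    · apply AlgHom.ext
      intro t
      have h2 : (Algebra.TensorProduct.includeLeft : K →ₐ[k] K ⊗[k] B) t
          = t ⊗ₜ[k] (1 : B) := rfl
      simp only [AlgHom.comp_apply, h2]
      rw [Algebra.TensorProduct.productMap_apply_tmul]
      simp only [AlgHom.coe_id, id_eq, map_one, mul_one]
      show t = ε.symm (π (t ⊗ₜ[k] (1 : B)))
      have h3 : (t ⊗ₜ[k] (1 : B)) = algebraMap K (K ⊗[k] B) t := rfl
      rw [h3, π.commutes]
      have h4 := ε.symm.commutes t
      simp only [Algebra.algebraMap_self, RingHom.id_apply] at h4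
      exact h4.symm
    · apply AlgHom.ext
      intro b
      simp [hf]
  have hker : I ≤ RingHom.ker φ := by
    intro z hz
    rw [RingHom.mem_ker]
    show ε.symm (π z) = 0
    rw [hπ]
    simp only [AlgHom.comp_apply, Ideal.Quotient.mkₐ_eq_mk]
    rw [Ideal.Quotient.eq_zero_iff_mem.mpr hz]
    rw [map_zero, map_zero]
  refine ⟨f, ?_, ?_⟩
  · rw [hφ]; exact hker
  · rw [hφ]
    intro h0
    apply hnm
    have : π a = 0 := by
      have := congrArg ε h0
      rw [map_zero] at this
      rw [show ε (φ a) = π a from by rw [hφdef]; simp] at this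
      exact this
    rw [hπ] at this
    simp only [AlgHom.comp_apply, Ideal.Quotient.mkₐ_eq_mk] at this
    exact Ideal.Quotient.eq_zero_iff_mem.mp this

private lemma aux_one_tmul_eq_zero (k K : Type*) [Field k] [Field K] [Algebra k K]
    (N : Type*) [AddCommGroup N] [Module k N] (n : N)
    (h : (1 : K) ⊗ₜ[k] n = (0 : K ⊗[k] N)) : n = 0 := by
  let bN := Module.Basis.ofVectorSpace k N
  let bK := bN.baseChange K
  have h1 : bK.repr ((1 : K) ⊗ₜ[k] n) = 0 := by rw [h, map_zero]
  have h2 : ∀ i, bN.repr n i = 0 := by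
    intro i
    have h3 := congrFun (congrArg (⇑) h1) i
    rw [Module.Basis.baseChange_repr_tmul] at h3
    simp only [Finsupp.coe_zero, Pi.zero_apply] at h3
    have h4 : (algebraMap k K) (bN.repr n i) = 0 := by
      rw [← h3, Algebra.smul_def, mul_one]
    exact (algebraMap k K).injective (by rw [h4, map_zero])
  have : bN.repr n = 0 := Finsupp.ext h2
  exact bN.repr.map_eq_zero_iff.mp this

private lemma aux_ft_descent (k K C : Type*) [Field k] [Field K] [Algebra k K]
    [CommRing C] [Algebra k C]
    (h : Algebra.FiniteType K (K ⊗[k] C)) : Algebra.FiniteType k C := by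
  classical
  obtain ⟨s, hs⟩ := h.out
  have hx : ∀ x : K ⊗[k] C, ∃ t : Finset C,
      x ∈ Submodule.span K ((fun c => (1 : K) ⊗ₜ[k] c) '' (t : Set C)) := by
    intro x
    induction x using TensorProduct.induction_on with
    | zero => exact ⟨∅, Submodule.zero_mem _⟩
    | tmul a c =>
        refine ⟨{c}, ?_⟩
        have : a ⊗ₜ[k] c = a • ((1 : K) ⊗ₜ[k] c) := by
          rw [smul_tmul', smul_eq_mul, mul_one]
        rw [this]
        exact Submodule.smul_mem _ _ (Submodule.subset_span ⟨c, by simp, rfl⟩)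
    | add x y hx hy =>
        obtain ⟨t1, h1⟩ := hx
        obtain ⟨t2, h2⟩ := hy
        refine ⟨t1 ∪ t2, Submodule.add_mem _ ?_ ?_⟩
        · exact Submodule.span_mono (Set.image_mono (by simp [Finset.coe_union])) h1
        · exact Submodule.span_mono (Set.image_mono (by simp [Finset.coe_union])) h2
  choose t ht using hx
  set T : Finset C := s.biUnion (fun x => t x) with hT
  set A' : Subalgebra k C := Algebra.adjoin k (T : Set C) with hA'
  set sp : Submodule K (K ⊗[k] C) :=
    Submodule.span K ((fun c => (1 : K) ⊗ₜ[k] c) '' (A' : Set C)) with hsp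
  have h1mem : (1 : K ⊗[k] C) ∈ sp := by
    rw [Algebra.TensorProduct.one_def]
    exact Submodule.subset_span ⟨1, A'.one_mem, rfl⟩
  have hmul : ∀ x y : K ⊗[k] C, x ∈ sp → y ∈ sp → x * y ∈ sp := by
    intro x y hx hy
    induction hx using Submodule.span_induction with
    | mem x hxg =>
        obtain ⟨a, haA, rfl⟩ := hxg
        induction hy using Submodule.span_induction with
        | mem y hyg =>
            obtain ⟨a', haA', rfl⟩ := hyg
            have : ((1:K) ⊗ₜ[k] a) * ((1:K) ⊗ₜ[k] a') = (1:K) ⊗ₜ[k] (a * a') := by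
              rw [Algebra.TensorProduct.tmul_mul_tmul, mul_one]
            rw [this]
            exact Submodule.subset_span ⟨a * a', A'.mul_mem haA haA', rfl⟩
        | zero => rw [mul_zero]; exact sp.zero_mem
        | add y₁ y₂ _ _ hy₁ hy₂ => rw [mul_add]; exact sp.add_mem hy₁ hy₂
        | smul c y _ hy => rw [mul_smul_comm]; exact sp.smul_mem c hy
    | zero => rw [zero_mul]; exact sp.zero_mem
    | add x₁ x₂ _ _ hx₁ hx₂ => rw [add_mul]; exact sp.add_mem hx₁ hx₂
    | smul c x _ hx => rw [smul_mul_assoc]; exact sp.smul_mem c hx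
  set SA : Subalgebra K (K ⊗[k] C) := Submodule.toSubalgebra sp h1mem hmul with hSA
  have htop : ∀ z : K ⊗[k] C, z ∈ sp := by
    intro z
    have h5 : Algebra.adjoin K (s : Set (K ⊗[k] C)) ≤ SA := by
      apply Algebra.adjoin_le
      intro x hxs
      show x ∈ sp
      refine Submodule.span_mono (Set.image_mono ?_) (ht x)
      intro c hc
      exact Algebra.subset_adjoin (by
        simp only [Finset.mem_coe] at hc ⊢
        exact Finset.mem_biUnion.mpr ⟨x, hxs, hc⟩)
    have := h5 (hs ▸ Algebra.mem_top : z ∈ Algebra.adjoin K (s : Set (K ⊗[k] C)))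
    exact this
  -- now conclude every c : C lies in A'
  have hC : ∀ c : C, c ∈ A' := by
    intro c
    set W' : Submodule k C := Subalgebra.toSubmodule A' with hW'
    set Qc : K ⊗[k] C →ₗ[K] K ⊗[k] (C ⧸ W') := LinearMap.baseChange K W'.mkQ with hQc
    have hker : sp ≤ LinearMap.ker Qc := by
      rw [Submodule.span_le]
      rintro _ ⟨a, haA, rfl⟩
      rw [SetLike.mem_coe, LinearMap.mem_ker, LinearMap.baseChange_tmul]
      have : W'.mkQ a = 0 := (Submodule.Quotient.mk_eq_zero W').mpr haA
      rw [this, tmul_zero]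
    have h6 : Qc ((1 : K) ⊗ₜ[k] c) = 0 := hker (htop _)
    rw [LinearMap.baseChange_tmul] at h6
    have h7 : W'.mkQ c = 0 := aux_one_tmul_eq_zero k K (C ⧸ W') _ h6
    exact (Submodule.Quotient.mk_eq_zero W').mp h7
  exact ⟨⟨T, Algebra.eq_top_iff.mpr hC⟩⟩

private lemma aux_stable (k K B : Type*) [Field k] [Field K] [IsAlgClosed K] [Algebra k K]
    [CommRing B] [Algebra k B] (I : Ideal (K ⊗[k] B)) (hrad : I.IsRadical)
    (hfg : Algebra.FiniteType K ((K ⊗[k] B) ⧸ I))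
    (hinv : ∀ (σ : K ≃ₐ[k] K) (f : B →ₐ[k] K),
      I ≤ RingHom.ker (Algebra.TensorProduct.productMap (AlgHom.id k K) f) →
      I ≤ RingHom.ker
        (Algebra.TensorProduct.productMap (AlgHom.id k K) (σ.toAlgHom.comp f)))
    (σ : K ≃ₐ[k] K) (z : K ⊗[k] B) (hz : z ∈ I) :
    (Algebra.TensorProduct.map σ.toAlgHom (AlgHom.id k B)) z ∈ I := by
  by_contra hzI
  obtain ⟨f, hker, hne⟩ := aux_points k K B I hrad hfg _ hzI
  apply hne
  have hval : ∀ w : K ⊗[k] B,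
      (Algebra.TensorProduct.productMap (AlgHom.id k K) f)
        ((Algebra.TensorProduct.map σ.toAlgHom (AlgHom.id k B)) w)
      = σ ((Algebra.TensorProduct.productMap (AlgHom.id k K)
          (σ.symm.toAlgHom.comp f)) w) := by
    intro w
    induction w using TensorProduct.induction_on with
    | zero => simp
    | tmul c b =>
        simp only [Algebra.TensorProduct.map_tmul,
          Algebra.TensorProduct.productMap_apply_tmul, AlgHom.coe_id, id_eq,
          AlgHom.comp_apply, AlgEquiv.toAlgHom_eq_coe, AlgEquiv.coe_algHom, map_mul]
        simp
    | add w₁ w₂ h₁ h₂ => simp only [map_add, h₁, h₂]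
  rw [hval]
  have h0 : (Algebra.TensorProduct.productMap (AlgHom.id k K)
      (σ.symm.toAlgHom.comp f)) z = 0 := by
    have := hinv σ.symm f hker hz
    rwa [RingHom.mem_ker] at this
  rw [h0, map_zero]

/-- Proposition A.2 (Galois descent of closed subschemes, coordinate-ring form):
a radical ideal `I` of `K ⊗[k] B` with finitely generated quotient whose `K`-points
are stable under `Aut(K/k)` is the extension of a radical ideal `I₀ ⊆ B` with
finitely generated quotient. -/
theorem ideal_descends_of_aut_invariant
    (k : Type*) [Field k] [CharZero k]
    (K : Type*) [Field K] [IsAlgClosed K] [Algebra k K]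
    (B : Type*) [CommRing B] [Algebra k B]
    (I : Ideal (K ⊗[k] B)) (hrad : I.IsRadical)
    (hfg : Algebra.FiniteType K ((K ⊗[k] B) ⧸ I))
    (hinv : ∀ (σ : K ≃ₐ[k] K) (f : B →ₐ[k] K),
      I ≤ RingHom.ker (Algebra.TensorProduct.productMap (AlgHom.id k K) f) →
      I ≤ RingHom.ker
        (Algebra.TensorProduct.productMap (AlgHom.id k K) (σ.toAlgHom.comp f))) :
    ∃ I₀ : Ideal B, I₀.IsRadical ∧ Algebra.FiniteType k (B ⧸ I₀) ∧
      I = Ideal.map (Algebra.TensorProduct.includeRight : B →ₐ[k] K ⊗[k] B) I₀ := by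
  classical
  set incl : B →ₐ[k] K ⊗[k] B := Algebra.TensorProduct.includeRight with hincl
  set I₀ : Ideal B := I.comap incl with hI₀
  have hmemI₀ : ∀ b : B, b ∈ I₀ ↔ (1 : K) ⊗ₜ[k] b ∈ I := fun b => Iff.rfl
  have hrad₀ : I₀.IsRadical := hrad.comap incl.toRingHom
  set W : Submodule k B := Submodule.restrictScalars k (I₀ : Ideal B) with hW
  set Q : K ⊗[k] B →ₗ[K] K ⊗[k] (B ⧸ W) := LinearMap.baseChange K W.mkQ with hQ
  have hkerQ : ∀ z : K ⊗[k] B, Q z = 0 → z ∈ Ideal.map incl I₀ := by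
    intro z hz
    have h1 : (⇑Q : K ⊗[k] B → K ⊗[k] (B ⧸ W)) = ⇑(LinearMap.lTensor K W.mkQ) :=
      LinearMap.baseChange_eq_ltensor _
    have h2 : z ∈ LinearMap.ker (LinearMap.lTensor K W.mkQ) := by
      rw [LinearMap.mem_ker, ← congrFun h1 z]; exact hz
    rw [lTensor_mkQ] at h2
    obtain ⟨y, rfl⟩ := h2
    clear hz
    induction y using TensorProduct.induction_on with
    | zero => simpa using (Ideal.map incl I₀).zero_mem
    | tmul c w =>
        have h3 : (LinearMap.lTensor K W.subtype) (c ⊗ₜ[k] w) = c ⊗ₜ[k] (w : B) := rfl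
        have h4 : (c ⊗ₜ[k] (w : B) : K ⊗[k] B)
            = (c ⊗ₜ[k] (1 : B)) * ((1 : K) ⊗ₜ[k] (w : B)) := by
          rw [Algebra.TensorProduct.tmul_mul_tmul, mul_one, one_mul]
        rw [h3, h4]
        exact Ideal.mul_mem_left _ _ (Ideal.mem_map_of_mem incl (show (w : B) ∈ I₀ from w.2))
    | add y₁ y₂ h₁ h₂ =>
        rw [map_add]
        exact (Ideal.map incl I₀).add_mem h₁ h₂
  have hEI : Ideal.map incl I₀ ≤ I := Ideal.map_comap_le
  set V : Submodule K (K ⊗[k] (B ⧸ W)) := Submodule.map Q (Submodule.restrictScalars K I)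
    with hV
  have hQcomm : ∀ (σ : K ≃ₐ[k] K) (z : K ⊗[k] B),
      Q ((Algebra.TensorProduct.map σ.toAlgHom (AlgHom.id k B)) z)
      = (LinearMap.rTensor (B ⧸ W) (σ.toLinearMap : K →ₗ[k] K)) (Q z) := by
    intro σ z
    induction z using TensorProduct.induction_on with
    | zero => simp
    | tmul c b =>
        rw [hQ]
        simp only [Algebra.TensorProduct.map_tmul, LinearMap.baseChange_tmul,
          LinearMap.rTensor_tmul, AlgEquiv.toAlgHom_eq_coe, AlgEquiv.coe_algHom,
          AlgHom.coe_id, id_eq, AlgEquiv.toLinearMap_apply]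
    | add z₁ z₂ h₁ h₂ => simp only [map_add, h₁, h₂]
  have hstabV : ∀ (σ : K ≃ₐ[k] K) (v : K ⊗[k] (B ⧸ W)), v ∈ V →
      (LinearMap.rTensor (B ⧸ W) (σ.toLinearMap : K →ₗ[k] K)) v ∈ V := by
    rintro σ v ⟨z, hz, rfl⟩
    exact ⟨(Algebra.TensorProduct.map σ.toAlgHom (AlgHom.id k B)) z,
      aux_stable k K B I hrad hfg hinv σ z hz, hQcomm σ z⟩
  have hdisjV : ∀ n : B ⧸ W, (1 : K) ⊗ₜ[k] n ∈ V → n = 0 := by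
    rintro n ⟨z, hz, hQz⟩
    obtain ⟨b, rfl⟩ := W.mkQ_surjective n
    have h1 : Q ((1 : K) ⊗ₜ[k] b) = (1 : K) ⊗ₜ[k] (W.mkQ b) := by
      rw [hQ, LinearMap.baseChange_tmul]
    have h2 : z - (1 : K) ⊗ₜ[k] b ∈ I :=
      hEI (hkerQ _ (by rw [map_sub, hQz, h1, sub_self]))
    have h3 : (1 : K) ⊗ₜ[k] b ∈ I := by
      have := I.sub_mem hz h2
      simpa using this
    have h4 : b ∈ W := (hmemI₀ b).mpr h3
    simpa using (Submodule.Quotient.mk_eq_zero W).mpr h4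
  have hVbot : V = ⊥ := aux_core k K (B ⧸ W) V hstabV hdisjV
  have hIle : I ≤ Ideal.map incl I₀ := by
    intro z hz
    apply hkerQ
    have hmem : Q z ∈ V := ⟨z, hz, rfl⟩
    rw [hVbot] at hmem
    simpa using hmem
  have hImap : I = Ideal.map incl I₀ := le_antisymm hIle hEI
  have hftC : Algebra.FiniteType K (K ⊗[k] (B ⧸ I₀)) := by
    set φ : K ⊗[k] B →ₐ[K] K ⊗[k] (B ⧸ I₀) :=
      Algebra.TensorProduct.map (AlgHom.id K K) (Ideal.Quotient.mkₐ k I₀) with hφ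
    have hφs : Function.Surjective φ := by
      intro x
      induction x using TensorProduct.induction_on with
      | zero => exact ⟨0, map_zero φ⟩
      | tmul c y =>
          obtain ⟨b, rfl⟩ := Ideal.Quotient.mk_surjective y
          exact ⟨c ⊗ₜ[k] b, rfl⟩
      | add x₁ x₂ h₁ h₂ =>
          obtain ⟨z₁, rfl⟩ := h₁
          obtain ⟨z₂, rfl⟩ := h₂
          exact ⟨z₁ + z₂, map_add φ _ _⟩
    have hφker : ∀ a ∈ I, φ a = 0 := by
      have hle : Ideal.map incl I₀ ≤ RingHom.ker φ := by
        rw [Ideal.map_le_iff_le_comap]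
        intro b hb
        rw [Ideal.mem_comap, RingHom.mem_ker]
        show φ ((1 : K) ⊗ₜ[k] b) = 0
        have h5 : φ ((1 : K) ⊗ₜ[k] b) = (1 : K) ⊗ₜ[k] (Ideal.Quotient.mk I₀ b) := rfl
        rw [h5, Ideal.Quotient.eq_zero_iff_mem.mpr hb, tmul_zero]
      intro a haI
      have := hle (hImap ▸ haI)
      rwa [RingHom.mem_ker] at this
    set ρ : (K ⊗[k] B) ⧸ I →ₐ[K] K ⊗[k] (B ⧸ I₀) := Ideal.Quotient.liftₐ I φ hφker with hρ
    have hρs : Function.Surjective ρ := by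
      intro x
      obtain ⟨a, rfl⟩ := hφs x
      exact ⟨Ideal.Quotient.mk I a, by rw [hρ, Ideal.Quotient.liftₐ_apply]; rfl⟩
    exact hfg.of_surjective ρ hρs
  exact ⟨I₀, hrad₀, aux_ft_descent k K (B ⧸ I₀) hftC, hImap⟩
end

section
/- Let k be an algebraically closed field, B a commutative k-algebra, C a reduced finitely generated commutative k-algebra, and φ : B → C an integral k-algebra homomorphism (every element of C is integral over the image of B). Then there exists a unique radical ideal I ⊆ B with the following properties: the quotient B/I is a (reduced) finitely generated k-algebra, and for every k-algebra homomorphism f : B → k one has I ⊆ ker f if and only if there exists a k-algebra homomorphism g : C → k with g ∘ φ = f. -/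
/-- For a finite type algebra over an algebraically closed field, every maximal ideal is
the kernel of a `k`-point. -/
lemma exists_algHom_ker_eq_of_isMaximal
    (k : Type*) [Field k] [IsAlgClosed k]
    (R : Type*) [CommRing R] [Algebra k R] [Algebra.FiniteType k R]
    (m : Ideal R) (hm : m.IsMaximal) : ∃ h : R →ₐ[k] k, RingHom.ker h = m := by
  letI : Field (R ⧸ m) := Ideal.Quotient.field m
  haveI : Algebra.FiniteType k (R ⧸ m) :=
    Algebra.FiniteType.of_surjective (Ideal.Quotient.mkₐ k m)
      (Ideal.Quotient.mkₐ_surjective k m)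
  haveI : Module.Finite k (R ⧸ m) := finite_of_finite_type_of_isJacobsonRing k (R ⧸ m)
  haveI : Algebra.IsIntegral k (R ⧸ m) := Algebra.IsIntegral.of_finite k (R ⧸ m)
  have hsurj : Function.Surjective (algebraMap k (R ⧸ m)) :=
    IsAlgClosed.algebraMap_bijective_of_isIntegral.2
  have hinj : Function.Injective (algebraMap k (R ⧸ m)) :=
    (algebraMap k (R ⧸ m)).injective
  let e : k ≃ₐ[k] (R ⧸ m) := AlgEquiv.ofBijective (Algebra.ofId k (R ⧸ m)) ⟨hinj, hsurj⟩
  refine ⟨e.symm.toAlgHom.comp (Ideal.Quotient.mkₐ k m), ?_⟩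
  ext x
  simp only [RingHom.mem_ker, AlgHom.coe_comp, AlgEquiv.toAlgHom_eq_coe, AlgHom.coe_coe,
    Function.comp_apply, Ideal.Quotient.mkₐ_eq_mk]
  rw [← map_zero e.symm]
  rw [AlgEquiv.coe_algHom, e.symm.injective.eq_iff]
  rw [← Ideal.Quotient.eq_zero_iff_mem (I := m)]

/-- A radical ideal with finite type quotient over an algebraically closed field is determined
by its `k`-points. -/
lemma mem_of_forall_point
    (k : Type*) [Field k] [IsAlgClosed k]
    (B : Type*) [CommRing B] [Algebra k B]
    (J : Ideal B) (hrad : J.IsRadical) [Algebra.FiniteType k (B ⧸ J)]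
    (b : B) (hb : ∀ f : B →ₐ[k] k, J ≤ RingHom.ker f → f b = 0) : b ∈ J := by
  haveI : IsReduced (B ⧸ J) := (Ideal.isRadical_iff_quotient_reduced J).mp hrad
  haveI : IsJacobsonRing (B ⧸ J) := isJacobsonRing_of_finiteType (A := k)
  by_contra hbJ
  have hb0 : (Ideal.Quotient.mk J) b ≠ 0 := by
    simpa [Ideal.Quotient.eq_zero_iff_mem] using hbJ
  have hrad0 : (⊥ : Ideal (B ⧸ J)).IsRadical := by
    intro x hx
    obtain ⟨n, hn⟩ := hx
    exact IsNilpotent.eq_zero ⟨n, by simpa using hn⟩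
  have hjac : (⊥ : Ideal (B ⧸ J)).jacobson = ⊥ := IsJacobsonRing.out ‹IsJacobsonRing (B ⧸ J)› hrad0
  have : (Ideal.Quotient.mk J) b ∉ (⊥ : Ideal (B ⧸ J)).jacobson := by
    rw [hjac]; simpa using hb0
  rw [Ideal.jacobson, Ideal.mem_sInf] at this
  push_neg at this
  obtain ⟨m, ⟨-, hm⟩, hbm⟩ := this
  obtain ⟨h, hker⟩ := exists_algHom_ker_eq_of_isMaximal k (B ⧸ J) m hm
  have := hb (h.comp (Ideal.Quotient.mkₐ k J)) ?_
  · apply hbm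
    rw [← hker]
    simpa using this
  · intro x hx
    simp [RingHom.mem_ker, Ideal.Quotient.eq_zero_iff_mem.mpr hx]

/-- Proposition A.3 (coordinate-ring form): for an integral `k`-algebra
homomorphism `φ : B → C` with `C` reduced and of finite type over the
algebraically closed field `k`, there is a unique radical ideal `I ⊆ B` with
finitely generated quotient whose `k`-points are exactly the `k`-points of `B`
factoring through `φ`. -/
theorem exists_unique_radical_ideal_image_of_integral
    (k : Type*) [Field k] [IsAlgClosed k]
    (B : Type*) [CommRing B] [Algebra k B]
    (C : Type*) [CommRing C] [Algebra k C] [IsReduced C] [Algebra.FiniteType k C]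
    (φ : B →ₐ[k] C) (hint : φ.toRingHom.IsIntegral) :
    ∃! I : Ideal B, I.IsRadical ∧ Algebra.FiniteType k (B ⧸ I) ∧
      ∀ f : B →ₐ[k] k,
        (I ≤ RingHom.ker f ↔ ∃ g : C →ₐ[k] k, g.comp φ = f) := by
  classical
  set I : Ideal B := RingHom.ker φ with hIdef
  -- I is radical since C is reduced
  have hIrad : I.IsRadical := by
    intro x hx
    obtain ⟨n, hn⟩ := hx
    have : (φ x) ^ n = 0 := by
      rw [← map_pow]
      exact hn
    have : IsNilpotent (φ x) := ⟨n, this⟩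
    exact IsNilpotent.eq_zero this
  -- finite type quotient, via Artin--Tate
  set A : Subalgebra k C := φ.range with hAdef
  haveI : Algebra.IsIntegral A C := by
    constructor
    intro c
    obtain ⟨p, hp, hp0⟩ := hint c
    refine ⟨p.map φ.rangeRestrict.toRingHom, hp.map _, ?_⟩
    rw [Polynomial.eval₂_map]
    have : (algebraMap A C).comp φ.rangeRestrict.toRingHom = φ.toRingHom := by
      ext b; rfl
    rw [this]
    exact hp0
  haveI : Algebra.FiniteType A C := Algebra.FiniteType.of_restrictScalars_finiteType k A C
  haveI : Module.Finite A C := Algebra.IsIntegral.finite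
  have hfgA : (⊤ : Subalgebra k A).FG :=
    fg_of_fg_of_fg k A C (Algebra.FiniteType.out) (Module.Finite.fg_top)
      Subtype.val_injective
  haveI hFTA : Algebra.FiniteType k A := ⟨hfgA⟩
  have eqv : (B ⧸ I) ≃ₐ[k] A := by
    have := Ideal.quotientKerAlgEquivOfSurjective (φ.rangeRestrict_surjective)
    exact (Ideal.quotientEquivAlgOfEq k (AlgHom.ker_rangeRestrict φ)).symm.trans this
  have hIft : Algebra.FiniteType k (B ⧸ I) := Algebra.FiniteType.equiv hFTA eqv.symm
  -- the point property
  have hpoint : ∀ f : B →ₐ[k] k,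
      (I ≤ RingHom.ker f ↔ ∃ g : C →ₐ[k] k, g.comp φ = f) := by
    intro f
    constructor
    · intro hf
      letI : Algebra B C := φ.toRingHom.toAlgebra
      haveI : Algebra.IsIntegral B C := ⟨hint⟩
      haveI : (RingHom.ker f).IsMaximal := by
        refine RingHom.ker_isMaximal_of_surjective f ?_
        intro a
        exact ⟨algebraMap k B a, by simp⟩
      obtain ⟨M, hM, hMc⟩ := Ideal.exists_ideal_over_maximal_of_isIntegral
        (R := B) (S := C) (RingHom.ker f) hf
      obtain ⟨g, hg⟩ := exists_algHom_ker_eq_of_isMaximal k C M hM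
      refine ⟨g, ?_⟩
      have hker : RingHom.ker (g.comp φ) = RingHom.ker f := by
        ext x
        rw [← hMc]
        simp only [RingHom.mem_ker, AlgHom.coe_comp, Function.comp_apply, Ideal.mem_comap]
        rw [← hg]
        rfl
      ext b
      have hb : b - algebraMap k B (f b) ∈ RingHom.ker f := by
        simp [RingHom.mem_ker]
      rw [← hker] at hb
      rw [RingHom.mem_ker] at hb
      simp only [AlgHom.coe_comp, Function.comp_apply, map_sub, AlgHom.commutes] at hb
      simpa [sub_eq_zero] using hb
    · rintro ⟨g, rfl⟩
      intro x hx
      have hx0 : φ x = 0 := hx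
      simp [RingHom.mem_ker, hx0]
  refine ⟨I, ⟨hIrad, hIft, hpoint⟩, ?_⟩
  rintro J ⟨hJrad, hJft, hJpt⟩
  have hiff : ∀ f : B →ₐ[k] k, J ≤ RingHom.ker f ↔ I ≤ RingHom.ker f := by
    intro f; rw [hJpt f, hpoint f]
  haveI := hJft
  haveI := hIft
  apply le_antisymm
  · intro b hbJ
    exact mem_of_forall_point k B I hIrad b
      (fun f hf => ((hiff f).mpr hf) hbJ)
  · intro b hbI
    exact mem_of_forall_point k B J hJrad b
      (fun f hf => ((hiff f).mp hf) hbI)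
end

section
/- Let K be a field of characteristic zero and let A_0, A_1, A_∞ be 2×2 matrices over K which are unipotent (i.e., (A_i − 1)^2 = 0 for i = 0, 1, ∞, where 1 denotes the identity matrix) and satisfy A_0 · A_1 · A_∞ = 1. Then there exists a nonzero vector v ∈ K^2 with A_0 v = v, A_1 v = v, and A_∞ v = v; in other words, the three matrices have a common eigenvector (necessarily with eigenvalue 1). -/
theorem trZeroAux {K : Type*} [Field K] (a b c d : K)
    (h1 : a*a + b*c = 0) (h2 : a*b + b*d = 0) (h3 : c*a + d*c = 0)
    (h4 : c*b + d*d = 0) : a + d = 0 := by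
  rcases eq_or_ne (a + d) 0 with h | h
  · exact h
  exfalso
  have hb : b = 0 := by
    have hh : b * (a + d) = 0 := by linear_combination h2
    rcases mul_eq_zero.mp hh with h' | h'
    · exact h'
    · exact absurd h' h
  have hc : c = 0 := by
    have hh : c * (a + d) = 0 := by linear_combination h3
    rcases mul_eq_zero.mp hh with h' | h'
    · exact h'
    · exact absurd h' h
  have ha : a = 0 := by
    have hh : a ^ 2 = 0 := by linear_combination h1 - c * hb
    exact pow_eq_zero_iff two_ne_zero |>.mp hh
  have hd : d = 0 := by
    have hh : d ^ 2 = 0 := by linear_combination h4 - b * hc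
    exact pow_eq_zero_iff two_ne_zero |>.mp hh
  exact h (by rw [ha, hd, add_zero])

theorem fix2 {K : Type*} [Field K] (M : Matrix (Fin 2) (Fin 2) K) (x y : K)
    (h1 : M 0 0 * x + M 0 1 * y = x) (h2 : M 1 0 * x + M 1 1 * y = y) :
    M.mulVec ![x, y] = ![x, y] := by
  funext i
  fin_cases i <;>
    simpa [Matrix.mulVec, dotProduct, Fin.sum_univ_two] using (by assumption)

theorem vecNe0 {K : Type*} [Field K] (x y : K) (h : ¬(x = 0 ∧ y = 0)) :
    (![x, y] : Fin 2 → K) ≠ 0 := by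
  intro hv
  rcases not_and_or.mp h with h | h
  · exact h (by simpa using congrFun hv 0)
  · exact h (by simpa using congrFun hv 1)

/-- Three unipotent 2×2 matrices with product the identity have a common
nonzero fixed vector. -/
theorem unipotent_triple_common_fixed_vector
    (K : Type*) [Field K] [CharZero K]
    (A₀ A₁ Ainf : Matrix (Fin 2) (Fin 2) K)
    (h₀ : (A₀ - 1) ^ 2 = 0) (h₁ : (A₁ - 1) ^ 2 = 0) (hinf : (Ainf - 1) ^ 2 = 0)
    (hprod : A₀ * A₁ * Ainf = 1) :
    ∃ v : Fin 2 → K, v ≠ 0 ∧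
      A₀.mulVec v = v ∧ A₁.mulVec v = v ∧ Ainf.mulVec v = v := by
  have h2 : Ainf * (A₀ * A₁) = 1 := mul_eq_one_comm.mp hprod
  have hB2 : (A₀ * A₁ - 1) ^ 2 = 0 := by
    have e1 : (A₀ * A₁) * (Ainf - 1) = 1 - A₀ * A₁ := by
      rw [mul_sub, mul_one, hprod]
    have e2 : (Ainf - 1) * (A₀ * A₁) = 1 - A₀ * A₁ := by
      rw [sub_mul, one_mul, h2]
    calc (A₀ * A₁ - 1) ^ 2 = (1 - A₀ * A₁) * (1 - A₀ * A₁) := by noncomm_ring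
      _ = ((A₀ * A₁) * (Ainf - 1)) * ((Ainf - 1) * (A₀ * A₁)) := by rw [e1, e2]
      _ = (A₀ * A₁) * ((Ainf - 1) ^ 2) * (A₀ * A₁) := by noncomm_ring
      _ = 0 := by rw [hinf, mul_zero, zero_mul]
  -- entry equations
  have e := fun i j => Matrix.ext_iff.mpr h₀ i j
  simp only [sq, Matrix.mul_apply, Matrix.sub_apply, Matrix.one_apply, Fin.sum_univ_two,
    Matrix.zero_apply] at e
  have e00 := e 0 0; have e01 := e 0 1; have e10 := e 1 0; have e11 := e 1 1
  norm_num at e00 e01 e10 e11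
  have f' := fun i j => Matrix.ext_iff.mpr h₁ i j
  simp only [sq, Matrix.mul_apply, Matrix.sub_apply, Matrix.one_apply, Fin.sum_univ_two,
    Matrix.zero_apply] at f'
  have f00 := f' 0 0; have f01 := f' 0 1; have f10 := f' 1 0; have f11 := f' 1 1
  norm_num at f00 f01 f10 f11
  have g' := fun i j => Matrix.ext_iff.mpr hB2 i j
  simp only [sq, Matrix.mul_apply, Matrix.sub_apply, Matrix.one_apply, Fin.sum_univ_two,
    Matrix.zero_apply] at g'
  have g00 := g' 0 0; have g01 := g' 0 1; have g10 := g' 1 0; have g11 := g' 1 1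
  norm_num at g00 g01 g10 g11
  -- traces
  have t0 : (A₀ 0 0 - 1) + (A₀ 1 1 - 1) = 0 :=
    trZeroAux (A₀ 0 0 - 1) (A₀ 0 1) (A₀ 1 0) (A₀ 1 1 - 1)
      (by linear_combination e00) (by linear_combination e01)
      (by linear_combination e10) (by linear_combination e11)
  have t1 : (A₁ 0 0 - 1) + (A₁ 1 1 - 1) = 0 :=
    trZeroAux (A₁ 0 0 - 1) (A₁ 0 1) (A₁ 1 0) (A₁ 1 1 - 1)
      (by linear_combination f00) (by linear_combination f01)
      (by linear_combination f10) (by linear_combination f11)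
  have tB : ((A₀ 0 0 * A₁ 0 0 + A₀ 0 1 * A₁ 1 0) - 1)
      + ((A₀ 1 0 * A₁ 0 1 + A₀ 1 1 * A₁ 1 1) - 1) = 0 :=
    trZeroAux ((A₀ 0 0 * A₁ 0 0 + A₀ 0 1 * A₁ 1 0) - 1)
      (A₀ 0 0 * A₁ 0 1 + A₀ 0 1 * A₁ 1 1) (A₀ 1 0 * A₁ 0 0 + A₀ 1 1 * A₁ 1 0)
      ((A₀ 1 0 * A₁ 0 1 + A₀ 1 1 * A₁ 1 1) - 1)
      (by linear_combination g00) (by linear_combination g01)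
      (by linear_combination g10) (by linear_combination g11)
  have hd0 : A₀ 1 1 = 2 - A₀ 0 0 := by linear_combination t0
  have hd1 : A₁ 1 1 = 2 - A₁ 0 0 := by linear_combination t1
  have r1 : (A₀ 0 0 - 1) * (A₀ 0 0 - 1) + A₀ 0 1 * A₀ 1 0 = 0 := e00
  have r2 : (A₁ 0 0 - 1) * (A₁ 0 0 - 1) + A₁ 0 1 * A₁ 1 0 = 0 := f00
  have r3 : 2 * ((A₀ 0 0 - 1) * (A₁ 0 0 - 1)) + A₀ 0 1 * A₁ 1 0 + A₀ 1 0 * A₁ 0 1 = 0 := by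
    linear_combination tB - A₁ 1 1 * hd0 - (2 - A₀ 0 0) * hd1
  have k1 : (A₀ 0 0 - 1) * (A₁ 0 0 - 1) + A₀ 0 1 * A₁ 1 0 = 0 := by
    have hh : ((A₀ 0 0 - 1) * (A₁ 0 0 - 1) + A₀ 0 1 * A₁ 1 0) ^ 2 = 0 := by
      linear_combination ((A₁ 0 0 - 1) * (A₁ 0 0 - 1)) * r1
        - (A₀ 0 1 * A₀ 1 0) * r2 + (A₀ 0 1 * A₁ 1 0) * r3
    exact pow_eq_zero_iff two_ne_zero |>.mp hh
  have k2 : A₀ 1 0 * A₁ 0 1 + (A₀ 0 0 - 1) * (A₁ 0 0 - 1) = 0 := by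
    linear_combination r3 - k1
  have k4 : (A₀ 0 0 - 1) * A₁ 0 1 - A₀ 0 1 * (A₁ 0 0 - 1) = 0 := by
    have hh : ((A₀ 0 0 - 1) * A₁ 0 1 - A₀ 0 1 * (A₁ 0 0 - 1)) ^ 2 = 0 := by
      linear_combination (A₁ 0 1 * A₁ 0 1) * r1 + (A₀ 0 1 * A₀ 0 1) * r2
        - (A₀ 0 1 * A₁ 0 1) * r3
    exact pow_eq_zero_iff two_ne_zero |>.mp hh
  have k5 : A₀ 1 0 * (A₁ 0 0 - 1) - (A₀ 0 0 - 1) * A₁ 1 0 = 0 := by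
    have hh : (A₀ 1 0 * (A₁ 0 0 - 1) - (A₀ 0 0 - 1) * A₁ 1 0) ^ 2 = 0 := by
      linear_combination (A₁ 1 0 * A₁ 1 0) * r1 + (A₀ 1 0 * A₀ 1 0) * r2
        - (A₀ 1 0 * A₁ 1 0) * r3
    exact pow_eq_zero_iff two_ne_zero |>.mp hh
  have main : ∃ v : Fin 2 → K, v ≠ 0 ∧ A₀.mulVec v = v ∧ A₁.mulVec v = v := by
    by_cases hQ : A₁ 0 0 - 1 = 0 ∧ A₁ 1 0 = 0
    · by_cases hf : A₁ 0 1 = 0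
      · by_cases hP : A₀ 0 0 - 1 = 0 ∧ A₀ 1 0 = 0
        · -- both matrices fix (1,0)
          refine ⟨![1, 0], vecNe0 _ _ (by simp), ?_, ?_⟩
          · exact fix2 _ _ _ (by linear_combination hP.1) (by linear_combination hP.2)
          · exact fix2 _ _ _ (by linear_combination hQ.1) (by linear_combination hQ.2)
        · -- v = first column of A₀ - 1
          refine ⟨![A₀ 0 0 - 1, A₀ 1 0], vecNe0 _ _ hP, ?_, ?_⟩
          · exact fix2 _ _ _ (by linear_combination r1)
              (by linear_combination A₀ 1 0 * hd0)
          · exact fix2 _ _ _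
              (by linear_combination (A₀ 0 0 - 1) * hQ.1 + A₀ 1 0 * hf)
              (by linear_combination (A₀ 0 0 - 1) * hQ.2 + A₀ 1 0 * hd1 - A₀ 1 0 * hQ.1)
      · -- v = second column of A₁ - 1
        refine ⟨![A₁ 0 1, 1 - A₁ 0 0], vecNe0 _ _ (fun h => hf h.1), ?_, ?_⟩
        · exact fix2 _ _ _ (by linear_combination k4)
            (by linear_combination k2 + (1 - A₁ 0 0) * hd0)
        · exact fix2 _ _ _ (by ring)
            (by linear_combination r2 + (1 - A₁ 0 0) * hd1)
    · -- v = first column of A₁ - 1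
      refine ⟨![A₁ 0 0 - 1, A₁ 1 0], vecNe0 _ _ hQ, ?_, ?_⟩
      · exact fix2 _ _ _ (by linear_combination k1)
          (by linear_combination k5 + A₁ 1 0 * hd0)
      · exact fix2 _ _ _ (by linear_combination r2)
          (by linear_combination A₁ 1 0 * hd1)
  obtain ⟨v, hv, hA0v, hA1v⟩ := main
  have hBv : (A₀ * A₁).mulVec v = v := by
    rw [← Matrix.mulVec_mulVec, hA1v, hA0v]
  refine ⟨v, hv, hA0v, hA1v, ?_⟩
  calc Ainf.mulVec v = Ainf.mulVec ((A₀ * A₁).mulVec v) := by rw [hBv]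
    _ = (Ainf * (A₀ * A₁)).mulVec v := Matrix.mulVec_mulVec _ _ _
    _ = v := by rw [h2, Matrix.one_mulVec]
end
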